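/- arXiv:1612.03607 — 3 statements merged into one kernel-verified Lean document; each statement's English description precedes it below -/
import Mathlib

section
/- Let (T̂, {B_x}) be the cut decomposition of a digraph H rooted at r, and let R be the set of arcs uv of H such that u ∈ B_x for some node x ∈ T̂ and v is an ancestor of x in T̂ (i.e., x lies in the subtree of T̂ rooted at v). Then every out-tree T of H rooted at r satisfies A(T) ∩ R = ∅. -/
namespace CutPaper

variable {V : Type*}

/-- A directed path in the digraph `A`, given as a nonempty list of distinct
vertices from `u` to `v` with consecutive vertices joined by arcs. -/
def IsPath (A : V → V → Prop) (p : List V) (u v : V) : Prop :=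
  p.Chain' A ∧ p.head? = some u ∧ p.getLast? = some v ∧ p.Nodup

/-- `v` is reachable from `u` in the digraph `A`. -/
def Reaches (A : V → V → Prop) (u v : V) : Prop := ∃ p, IsPath A p u v

/-- Two paths from `r` to `v` are internally disjoint: they share only `r` and `v`. -/
def IntDisj (p q : List V) (r v : V) : Prop :=
  ∀ x, x ∈ p → x ∈ q → x = r ∨ x = v

/-- `v` is bi-reachable from `r`: there are two (distinct) internally
vertex-disjoint paths from `r` to `v`. -/
def BiReachable (A : V → V → Prop) (r v : V) : Prop :=
  ∃ p q, p ≠ q ∧ IsPath A p r v ∧ IsPath A q r v ∧ IntDisj p q r v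

/-- The diblock of `r`: bi-reachable vertices together with `r` and its out-neighbours. -/
def diblock (A : V → V → Prop) (r : V) : Set V :=
  {v | BiReachable A r v} ∪ {r} ∪ {v | A r v}

/-- The subdigraph of `A` induced on a vertex set `S`. -/
def Asub (A : V → V → Prop) (S : Set V) : V → V → Prop :=
  fun u v => A u v ∧ u ∈ S ∧ v ∈ S

/-- The path `p` meets the set `B` for the last time in `x`. -/
def LastTouch (B : Set V) (p : List V) (x : V) : Prop :=
  ∃ p₁ p₂, p = p₁ ++ x :: p₂ ∧ x ∈ B ∧ ∀ y ∈ p₂, y ∉ B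

/-- `T` is an out-tree with vertex set `S` and root `r`, as a subdigraph of `A`. -/
structure IsOutTree (A T : V → V → Prop) (S : Set V) (r : V) : Prop where
  sub : ∀ u v, T u v → A u v
  mem : ∀ u v, T u v → u ∈ S ∧ v ∈ S
  root_mem : r ∈ S
  no_in_root : ∀ u, ¬ T u r
  unique_in : ∀ v ∈ S, v ≠ r → ∃! u, T u v
  reach : ∀ v ∈ S, Reaches T r v

/-- `T` is an in-tree with vertex set `S` and root `r`, as a subdigraph of `A`. -/
def IsInTree (A T : V → V → Prop) (S : Set V) (r : V) : Prop :=
  IsOutTree (fun u v => A v u) (fun u v => T v u) S r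

/-- The leaves (vertices of out-degree zero) of an out-tree `T` on vertex set `S`. -/
def leaves (T : V → V → Prop) (S : Set V) : Set V :=
  {v | v ∈ S ∧ ∀ u, ¬ T v u}

/-- The leaves (vertices of in-degree zero) of an in-tree `T` on vertex set `S`. -/
def inLeaves (T : V → V → Prop) (S : Set V) : Set V :=
  {v | v ∈ S ∧ ∀ u, ¬ T u v}

/-- The raw data of a rooted cut decomposition: a node set, a parent map,
and an assignment of diblocks to nodes. -/
structure PreDecomp (V : Type*) where
  N : Set V
  parent : V → V
  B : V → Set V

/-- One step up the decomposition tree rooted at `r`. -/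
def Step (d : PreDecomp V) (r : V) (a b : V) : Prop :=
  a ∈ d.N ∧ a ≠ r ∧ d.parent a = b

/-- `x` is an ancestor (not necessarily proper) of `y` in the decomposition tree. -/
def Anc (d : PreDecomp V) (r : V) (x y : V) : Prop :=
  Relation.ReflTransGen (Step d r) y x

/-- `y` is a child of `x` in the decomposition tree. -/
def IsChild (d : PreDecomp V) (r : V) (y x : V) : Prop :=
  y ∈ d.N ∧ y ≠ r ∧ d.parent y = x

/-- `B*_x`: the union of the diblocks over the subtree rooted at `x`. -/
def Bstar (d : PreDecomp V) (r : V) (x : V) : Set V :=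
  {v | ∃ y ∈ d.N, Anc d r x y ∧ v ∈ d.B y}

/-- The partition class `X_y` of a bottleneck `y` of the diblock of `x`
inside `B*_x`: the vertices below `B x` whose access paths from `x`
leave `B x` for the last time at `y`. -/
def PartClass (A : V → V → Prop) (d : PreDecomp V) (r x y : V) : Set V :=
  {v | v ∈ Bstar d r x ∧ v ∉ d.B x ∧
    ∀ p, IsPath (Asub A (Bstar d r x)) p x v → LastTouch (d.B x) p y}

/-- `d` is the `r`-rooted cut decomposition of the digraph `A`:
the tree is well-founded towards the root `r`, the diblocks cover all vertices,
each `B x` is the diblock of `x` in the subdigraph induced on `B*_x`,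
the children of `x` are exactly the bottlenecks of `B x`, and the subtree of a
child `y` spans exactly `{y}` together with the partition class of `y`. -/
structure IsCutDecomp (A : V → V → Prop) (r : V) (d : PreDecomp V) : Prop where
  root_mem : r ∈ d.N
  parent_mem : ∀ x ∈ d.N, x ≠ r → d.parent x ∈ d.N
  tree : ∀ x ∈ d.N, Anc d r r x
  cover : Bstar d r r = Set.univ
  diblock_eq : ∀ x ∈ d.N, d.B x = diblock (Asub A (Bstar d r x)) x
  child_iff : ∀ x ∈ d.N, ∀ y,
    IsChild d r y x ↔ (y ∈ d.B x ∧ y ≠ x ∧ (PartClass A d r x y).Nonempty)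
  child_part : ∀ x ∈ d.N, ∀ y, IsChild d r y x →
    Bstar d r y = insert y (PartClass A d r x y)


lemma split_unique {x : V} : ∀ (s₁ : List V) {t₁ s₂ t₂ : List V},
    (s₁ ++ x :: t₁).Nodup → s₁ ++ x :: t₁ = s₂ ++ x :: t₂ → t₁ = t₂ := by
  intro s₁
  induction s₁ with
  | nil =>
    intro t₁ s₂ t₂ hnd heq
    cases s₂ with
    | nil => simpa using heq
    | cons a s₂ =>
      simp only [List.nil_append, List.cons_append, List.cons.injEq] at heq
      obtain ⟨rfl, rfl⟩ := heq
      simp at hnd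
  | cons a s₁ ih =>
    intro t₁ s₂ t₂ hnd heq
    cases s₂ with
    | nil =>
      simp only [List.cons_append, List.nil_append, List.cons.injEq] at heq
      obtain ⟨rfl, heq⟩ := heq
      exfalso
      simp at hnd
    | cons b s₂ =>
      simp only [List.cons_append, List.cons.injEq] at heq
      have hnd' : (a :: (s₁ ++ x :: t₁)).Nodup := by simpa using hnd
      exact ih hnd'.of_cons heq.2

lemma lastTouch_eq {B : Set V} {p : List V} {a b : V}
    (hnd : p.Nodup) (ha : LastTouch B p a) (hb : LastTouch B p b) : a = b := by
  obtain ⟨p₁, p₂, rfl, haB, hp₂⟩ := ha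
  obtain ⟨q₁, q₂, heq, hbB, hq₂⟩ := hb
  by_contra hne
  have haq : a ∈ q₁ := by
    have : a ∈ q₁ ++ b :: q₂ := heq ▸ (by simp)
    rcases List.mem_append.1 this with h | h
    · exact h
    · rcases List.mem_cons.1 h with h | h
      · exact absurd h hne
      · exact absurd haB (hq₂ a h)
  obtain ⟨c₁, c₂, rfl⟩ := List.append_of_mem haq
  have heq' : p₁ ++ a :: p₂ = c₁ ++ a :: (c₂ ++ b :: q₂) := by
    rw [heq]; simp
  have := split_unique p₁ hnd heq'
  exact hp₂ b (this ▸ (by simp)) hbB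

lemma chain'_asub {A : V → V → Prop} {S : Set V} {q : List V}
    (hc : q.Chain' A) (hm : ∀ y ∈ q, y ∈ S) : q.Chain' (Asub A S) := by
  rw [show @List.Chain' V = List.IsChain from rfl, List.isChain_iff_getElem] at hc ⊢
  intro i hi
  exact ⟨hc i hi, hm _ (List.getElem_mem _), hm _ (List.getElem_mem _)⟩

lemma isPath_suffix {A : V → V → Prop} {p p₁ p₂ : List V} {r u v : V}
    (hp : IsPath A p r u) (he : p = p₁ ++ v :: p₂) : IsPath A (v :: p₂) v u := by
  obtain ⟨hc, hh, hl, hnd⟩ := hp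
  refine ⟨hc.suffix ⟨p₁, he.symm⟩, by simp, ?_, ?_⟩
  · rw [he, List.getLast?_append_cons] at hl; exact hl
  · exact hnd.sublist (by rw [he]; exact List.sublist_append_right p₁ (v :: p₂))

lemma isPath_prefix {A : V → V → Prop} {p c₁ c₂ : List V} {w u y : V}
    (hp : IsPath A p w u) (he : p = c₁ ++ y :: c₂) : IsPath A (c₁ ++ [y]) w y := by
  obtain ⟨hc, hh, hl, hnd⟩ := hp
  have hpre : (c₁ ++ [y]) <+: p := ⟨c₂, by rw [he]; simp⟩
  refine ⟨hc.prefix hpre, ?_, List.getLast?_concat, hnd.sublist hpre.sublist⟩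
  · rw [he] at hh
    have h2 : ((c₁ ++ [y]) ++ c₂).head? = some w := by simpa using hh
    rwa [List.head?_append_of_ne_nil _ (by simp)] at h2

lemma mem_getLast?' {p : List V} {u : V} (h : p.getLast? = some u) : u ∈ p := by
  obtain ⟨h', rfl⟩ := List.mem_getLast?_eq_getLast h
  exact List.getLast_mem h'

lemma mem_B_self {A : V → V → Prop} {r : V} {d : PreDecomp V}
    (h : IsCutDecomp A r d) {x : V} (hx : x ∈ d.N) : x ∈ d.B x := by
  rw [h.diblock_eq x hx]
  exact Or.inl (Or.inr rfl)

lemma mem_Bstar_self {A : V → V → Prop} {r : V} {d : PreDecomp V}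
    (h : IsCutDecomp A r d) {x : V} (hx : x ∈ d.N) : x ∈ Bstar d r x :=
  ⟨x, hx, Relation.ReflTransGen.refl, mem_B_self h hx⟩

lemma Bstar_subset_of_step {d : PreDecomp V} {r v w : V} (hs : Step d r v w) :
    Bstar d r v ⊆ Bstar d r w := by
  rintro y ⟨z, hz, hanc, hy⟩
  exact ⟨z, hz, hanc.tail hs, hy⟩

lemma key {A : V → V → Prop} {r : V} {d : PreDecomp V} (h : IsCutDecomp A r d)
    {v : V} (hanc : Anc d r r v) :
    v ∈ d.N → ∀ u ∈ Bstar d r v, ∀ p, IsPath A p r u →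
      ∃ p₁ p₂, p = p₁ ++ v :: p₂ ∧ ∀ y ∈ v :: p₂, y ∈ Bstar d r v := by
  unfold Anc at hanc
  induction hanc using Relation.ReflTransGen.head_induction_on with
  | refl =>
    intro _ u hu p hp
    obtain ⟨hc, hh, hl, hnd⟩ := hp
    cases p with
    | nil => simp at hh
    | cons a p =>
      have : a = r := by simpa using hh
      subst this
      exact ⟨[], p, rfl, fun y _ => by rw [h.cover]; trivial⟩
  | @head v w hs hanc ih =>
    intro hvN u hu p hp
    obtain ⟨hvN', hvr, hparent⟩ := hs
    have hwN : w ∈ d.N := hparent ▸ h.parent_mem v hvN' hvr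
    have hchild : IsChild d r v w := ⟨hvN', hvr, hparent⟩
    have hBv : Bstar d r v = insert v (PartClass A d r w v) :=
      h.child_part w hwN v hchild
    have huw : u ∈ Bstar d r w := Bstar_subset_of_step ⟨hvN', hvr, hparent⟩ hu
    obtain ⟨p₁, p₂, rfl, hmem⟩ := ih hwN u huw p hp
    have hqpath : IsPath A (w :: p₂) w u := isPath_suffix hp rfl
    have hqsub : IsPath (Asub A (Bstar d r w)) (w :: p₂) w u :=
      ⟨chain'_asub hqpath.1 hmem, hqpath.2.1, hqpath.2.2.1, hqpath.2.2.2⟩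
    -- helper to show membership in Bstar d r v of a vertex y on q after v
    have hvBw : v ∈ d.B w := ((h.child_iff w hwN v).1 hchild).1
    have hvBsv : v ∈ Bstar d r v := mem_Bstar_self h hvN'
    by_cases huv : u = v
    · -- u = v : v is the last vertex of q
      have hvq : v ∈ w :: p₂ := by rw [← huv]; exact mem_getLast?' hqpath.2.2.1
      obtain ⟨q₁, q₂, hsplit⟩ := List.append_of_mem hvq
      have hq₂ : q₂ = [] := by
        cases q₂ with
        | nil => rfl
        | cons b q₂ =>
          exfalso
          have hl := hqpath.2.2.1
          rw [hsplit, List.getLast?_append_cons, List.getLast?_cons_cons] at hl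
          have hmem' : v ∈ b :: q₂ := huv ▸ mem_getLast?' hl
          have hnd := hqpath.2.2.2
          rw [hsplit, List.nodup_append] at hnd
          exact (List.nodup_cons.1 hnd.2.1).1 hmem' 
      subst hq₂
      refine ⟨p₁ ++ q₁, [], by rw [hsplit]; simp, ?_⟩
      intro y hy
      simp only [List.mem_singleton, List.mem_cons, List.not_mem_nil, or_false] at hy
      subst hy
      exact hvBsv
    · -- u ≠ v : u is in the partition class of v
      have huPC : u ∈ PartClass A d r w v := by
        rw [hBv] at hu
        rcases hu with h' | h'
        · exact absurd h' huv
        · exact h'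
      obtain ⟨q₁, q₂, hqe, _, hq₂B⟩ := huPC.2.2 _ hqsub
      refine ⟨p₁ ++ q₁, q₂, by rw [hqe]; simp, ?_⟩
      intro y hy
      rcases List.mem_cons.1 hy with rfl | hy₂
      · exact hvBsv
      · -- y ∈ q₂ : y is in B*_w, not in B_w; show y ∈ PartClass w v
        have hyq : y ∈ w :: p₂ := by rw [hqe]; simp [hy₂]
        have hyBw : y ∈ Bstar d r w := hmem y hyq
        have hynB : y ∉ d.B w := hq₂B y hy₂
        obtain ⟨z, hzN, hancz, hyBz⟩ := hyBw
        rcases (hancz : Relation.ReflTransGen _ z w).cases_tail with rfl | ⟨c, hzc, hcw⟩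
        · exact absurd hyBz hynB
        · have hcchild : IsChild d r c w := ⟨hcw.1, hcw.2.1, hcw.2.2⟩
          have hyBc : y ∈ Bstar d r c := ⟨z, hzN, hzc, hyBz⟩
          rw [h.child_part w hwN c hcchild] at hyBc
          rcases hyBc with rfl | hyPC
          · exact absurd ((h.child_iff w hwN y).1 hcchild).1 hynB
          · -- show c = v using the prefix of q ending at y
            obtain ⟨a, b, rfl⟩ := List.append_of_mem hy₂
            have hqe' : w :: p₂ = (q₁ ++ v :: a) ++ y :: b := by rw [hqe]; simp
            have hppath : IsPath (Asub A (Bstar d r w)) ((q₁ ++ v :: a) ++ [y]) w y :=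
              isPath_prefix hqsub hqe'
            have hLT1 : LastTouch (d.B w) ((q₁ ++ v :: a) ++ [y]) c :=
              hyPC.2.2 _ hppath
            have hLT2 : LastTouch (d.B w) ((q₁ ++ v :: a) ++ [y]) v := by
              refine ⟨q₁, a ++ [y], by simp, hvBw, ?_⟩
              intro z' hz'
              rcases List.mem_append.1 hz' with h' | h'
              · exact hq₂B z' (by simp [h'])
              · rcases List.mem_singleton.1 h' with rfl
                exact hynB
            have hcv : c = v := lastTouch_eq hppath.2.2.2 hLT1 hLT2
            subst hcv
            rw [hBv]
            exact Or.inr hyPC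

/-- no out-tree rooted at `r` uses an arc from a diblock `B x`
to an ancestor `v` of `x` in the decomposition tree. -/
theorem cutDecomp_no_back_arc_in_outTree {V : Type*}
    (A : V → V → Prop) (r : V) (hreach : ∀ v, Reaches A r v)
    (d : PreDecomp V) (h : IsCutDecomp A r d)
    (T : V → V → Prop) (S : Set V) (hT : IsOutTree A T S r) :
    ∀ u v, T u v → ¬ ∃ x ∈ d.N, u ∈ d.B x ∧ v ∈ d.N ∧ Anc d r v x := by
  rintro u v hTuv ⟨x, hxN, huBx, hvN, hAnc⟩
  by_cases hvr : v = r
  · exact hT.no_in_root u (hvr ▸ hTuv)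
  have huS : u ∈ S := (hT.mem u v hTuv).1
  have hvS : v ∈ S := (hT.mem u v hTuv).2
  obtain ⟨p, hpT⟩ := hT.reach u huS
  have hpA : IsPath A p r u :=
    ⟨hpT.1.imp (fun a b => hT.sub a b), hpT.2.1, hpT.2.2.1, hpT.2.2.2⟩
  have huBs : u ∈ Bstar d r v := ⟨x, hxN, hAnc, huBx⟩
  obtain ⟨p₁, p₂, hpe, _⟩ := key h (h.tree v hvN) hvN u huBs p hpA
  -- p₁ ≠ [] since head of p is r ≠ v
  have hp₁ : p₁ ≠ [] := by
    intro h'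
    subst h'
    have := hpT.2.1
    rw [hpe] at this
    simp at this
    exact hvr this
  -- predecessor z of v on the path
  obtain ⟨z, hz⟩ : ∃ z, p₁.getLast? = some z := by
    cases hl : p₁.getLast? with
    | none => exact absurd (List.getLast?_eq_none_iff.1 hl) hp₁
    | some z => exact ⟨z, rfl⟩
  have hTzv : T z v := by
    have hc := hpT.1
    rw [hpe, show @List.Chain' V = List.IsChain from rfl, List.isChain_append] at hc
    exact hc.2.2 z hz v rfl
  -- u is the unique in-neighbour of v, so z = u
  obtain ⟨w₀, _, huniq⟩ := hT.unique_in v hvS hvr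
  have hzu : z = u := (huniq z hTzv).trans (huniq u hTuv).symm
  -- but z ∈ p₁ and u ∈ v :: p₂, contradicting Nodup
  have hzp₁ : z ∈ p₁ := mem_getLast?' hz
  have hup₂ : u ∈ v :: p₂ := by
    have hl := hpT.2.2.1
    rw [hpe, List.getLast?_append_cons] at hl
    exact mem_getLast?' hl
  have hnd := hpT.2.2.2
  rw [hpe, List.nodup_append] at hnd
  exact hnd.2.2 z hzp₁ z (hzu ▸ hup₂) rfl

end CutPaper
end

section
/- Let (T̂, {B_x}) be the r-rooted cut decomposition of a digraph H. For every vertex u ∈ V(H) and every set X ⊆ V(H) \ (V(T̂) ∪ {u}) of non-bottleneck vertices, there exists a directed path P from r to u in H such that |V(P) ∩ X| ≤ |X|/2. -/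
namespace CutPaper

variable {V : Type*}

/-! ### Auxiliary walk machinery -/

/-- A walk: like a path but without the Nodup condition. -/
def IsWalk (A : V → V → Prop) (p : List V) (u v : V) : Prop :=
  p.Chain' A ∧ p.head? = some u ∧ p.getLast? = some v

lemma IsWalk.ne_nil {A : V → V → Prop} {p : List V} {u v : V} (h : IsWalk A p u v) :
    p ≠ [] := by
  rintro rfl; simp [IsWalk] at h

lemma IsPath.isWalk {A : V → V → Prop} {p : List V} {u v : V} (h : IsPath A p u v) :
    IsWalk A p u v := ⟨h.1, h.2.1, h.2.2.1⟩

lemma walk_append {A : V → V → Prop} {p q : List V} {a b c : V}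
    (hp : IsWalk A p a b) (hq : IsWalk A q b c) : IsWalk A (p ++ q.tail) a c := by
  obtain ⟨hc, hh, hl⟩ := hp
  obtain ⟨hc', hh', hl'⟩ := hq
  obtain ⟨t, rfl⟩ : ∃ t, q = b :: t := by
    cases q with
    | nil => simp at hh'
    | cons x t => simp at hh'; exact ⟨t, by rw [hh']⟩
  simp only [List.tail_cons]
  refine ⟨?_, ?_, ?_⟩
  · rw [List.Chain', List.isChain_append]
    refine ⟨hc, hc'.tail, ?_⟩
    intro x hx y hy
    rw [hl] at hx
    simp at hx; subst hx
    have := List.isChain_cons.mp hc'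
    exact this.1 y hy
  · rw [List.head?_append, hh]; rfl
  · rw [List.getLast?_append]
    cases t with
    | nil =>
      simp at hl' ⊢; simpa [hl'.symm] using hl
    | cons z t' =>
      simp only [List.getLast?_cons_cons] at hl'
      rw [hl']; rfl

lemma walk_shortcut {A : V → V → Prop} {a b c : List V} {x u v : V}
    (h : IsWalk A (a ++ (x :: b) ++ (x :: c)) u v) :
    IsWalk A (a ++ (x :: c)) u v := by
  obtain ⟨hc, hh, hl⟩ := h
  rw [List.append_assoc] at hc hh hl
  rw [List.Chain', List.isChain_append] at hc
  obtain ⟨hca, hcm, hj⟩ := hc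
  rw [List.isChain_append] at hcm
  refine ⟨?_, ?_, ?_⟩
  · rw [List.Chain', List.isChain_append]
    exact ⟨hca, hcm.2.1, by simpa using hj⟩
  · rw [List.head?_append] at hh ⊢
    simpa using hh
  · rw [List.getLast?_append] at hl ⊢
    rw [List.getLast?_append] at hl
    cases c with
    | nil => simpa using hl
    | cons z t => simpa using hl

lemma walk_to_path {A : V → V → Prop} :
    ∀ n (p : List V) (u v : V), p.length ≤ n → IsWalk A p u v →
      ∃ q, IsPath A q u v ∧ ∀ x ∈ q, x ∈ p := by
  intro n
  induction n with
  | zero => intro p u v hl h; exact absurd (List.length_eq_zero_iff.mp (Nat.le_zero.mp hl)) h.ne_nil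
  | succ n ih =>
    intro p u v hl h
    by_cases hnd : p.Nodup
    · exact ⟨p, ⟨h.1, h.2.1, h.2.2, hnd⟩, fun x hx => hx⟩
    · classical
      rw [List.nodup_iff_count_le_one] at hnd
      push_neg at hnd
      obtain ⟨x, hx⟩ := hnd
      have hxm : x ∈ p := by
        rw [← List.count_pos_iff]; omega
      obtain ⟨s, t, rfl⟩ := List.append_of_mem hxm
      have hcnt : 0 < List.count x s + List.count x t := by
        rw [List.count_append, List.count_cons_self] at hx; omega
      have hform : ∃ a b c : List V, s ++ x :: t = a ++ (x :: b) ++ (x :: c) ∧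
          (a ++ (x :: c)).length < (s ++ x :: t).length := by
        rcases Nat.lt_or_ge 0 (List.count x t) with h1 | h1
        · have : x ∈ t := List.count_pos_iff.mp h1
          obtain ⟨m, t₂, rfl⟩ := List.append_of_mem this
          exact ⟨s, m, t₂, by simp, by simp⟩
        · have : x ∈ s := List.count_pos_iff.mp (by omega)
          obtain ⟨s₁, s₂, rfl⟩ := List.append_of_mem this
          exact ⟨s₁, s₂, t, by simp, by simp⟩
      obtain ⟨a, b, c, heq, hlen⟩ := hform
      rw [heq] at h hl
      have h' := walk_shortcut h
      have hlen' : (a ++ (x :: c)).length ≤ n := by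
        rw [heq] at hlen; omega
      obtain ⟨q, hq, hsub⟩ := ih _ u v hlen' h'
      refine ⟨q, hq, fun y hy => ?_⟩
      rw [heq]
      have := hsub y hy
      simp at this ⊢
      tauto

/-- every vertex of a path in an induced subdigraph lies in the vertex set,
provided the endpoints differ. -/
lemma path_mem_sub {A : V → V → Prop} {S : Set V} {p : List V} {u v : V}
    (h : IsPath (Asub A S) p u v) (hne : u ≠ v) : ∀ w ∈ p, w ∈ S := by
  obtain ⟨hc, hh, hl, hnd⟩ := h
  have hrel : ∀ w ∈ p, 2 ≤ p.length → ∃ z, Asub A S w z ∨ Asub A S z w := by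
    clear hh hl hnd hne
    induction p with
    | nil => simp
    | cons y t ih =>
      intro w hw hlen
      rcases List.mem_cons.mp hw with rfl | hwt
      · cases t with
        | nil => simp at hlen
        | cons z t' => exact ⟨z, Or.inl (List.isChain_cons_cons.mp hc).1⟩
      · cases t with
        | nil => simp at hwt
        | cons z t' =>
          rcases Nat.lt_or_ge ((z :: t').length) 2 with h2 | h2
          · interval_cases h : (z :: t').length
            · simp at h
            · obtain rfl : t' = [] := by simpa using h
              simp at hwt; subst hwt
              exact ⟨y, Or.inr (List.isChain_cons_cons.mp hc).1⟩
          · exact ih (List.isChain_cons_cons.mp hc).2 w hwt h2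
  intro w hw
  have hlen : 2 ≤ p.length := by
    cases p with
    | nil => simp at hh
    | cons y t =>
      cases t with
      | nil =>
        simp only [List.head?_cons, Option.some.injEq] at hh
        have hl' : y = v := by simpa using hl
        exact absurd (hh ▸ hl' ▸ rfl : u = v) hne
      | cons z t' => simp
  obtain ⟨z, hz | hz⟩ := hrel w hw hlen
  · exact hz.2.1
  · exact hz.2.2

/-- a prefix of a path is a path. -/
lemma path_prefix {A : V → V → Prop} {l₁ l₂ : List V} {v u w : V}
    (h : IsPath A (l₁ ++ v :: l₂) u w) : IsPath A (l₁ ++ [v]) u v := by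
  obtain ⟨hc, hh, hl, hnd⟩ := h
  have hsl : (l₁ ++ [v]).Sublist (l₁ ++ v :: l₂) :=
    List.Sublist.append_left ((List.cons_sublist_cons.mpr (List.nil_sublist l₂))) l₁
  refine ⟨?_, ?_, List.getLast?_concat, hnd.sublist hsl⟩
  · have : l₁ ++ v :: l₂ = (l₁ ++ [v]) ++ l₂ := by simp
    rw [this, List.Chain', List.isChain_append] at hc
    exact hc.1
  · rw [List.head?_append] at hh ⊢
    cases l₁ <;> simpa using hh

lemma mem_of_getLast?_eq {l : List V} {a : V} (h : l.getLast? = some a) : a ∈ l := by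
  obtain ⟨hne, heq⟩ := List.mem_getLast?_eq_getLast (l := l) (x := a) (Option.mem_def.mpr h)
  exact heq ▸ List.getLast_mem hne

lemma B_subset_Bstar {d : PreDecomp V} {r x : V} (hx : x ∈ d.N) :
    d.B x ⊆ Bstar d r x := fun v hv => ⟨x, hx, Relation.ReflTransGen.refl, hv⟩

lemma Bstar_child_subset {d : PreDecomp V} {r x y : V} (h : IsChild d r y x) :
    Bstar d r y ⊆ Bstar d r x := by
  rintro v ⟨z, hz, hanc, hv⟩
  exact ⟨z, hz, hanc.tail h, hv⟩

/-- pruning: a path from `x` to `y ∈ B x` inside `B*_x` avoids the partition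
class of `y`. -/
lemma prune {A : V → V → Prop} {d : PreDecomp V} {r x y : V}
    (hyB : y ∈ d.B x) {p : List V} (hp : IsPath (Asub A (Bstar d r x)) p x y) :
    ∀ v ∈ p, v ∉ PartClass A d r x y := by
  intro v hv hvP
  obtain ⟨_, hvB, hall⟩ := hvP
  have hvy : v ≠ y := fun h => hvB (h ▸ hyB)
  obtain ⟨l₁, l₂, rfl⟩ := List.append_of_mem hv
  have hpre := path_prefix hp
  obtain ⟨a, b, hab, -, -⟩ := hall _ hpre
  have hy1 : y ∈ l₁ := by
    have : y ∈ l₁ ++ [v] := by rw [hab]; simp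
    simp at this
    rcases this with h | h
    · exact h
    · exact absurd h.symm hvy
  have hy2 : y ∈ l₂ := by
    have hl := hp.2.2.1
    cases l₂ with
    | nil =>
      rw [List.getLast?_concat] at hl
      exact absurd (Option.some_injective _ hl) hvy
    | cons z t =>
      rw [List.getLast?_append_cons, List.getLast?_cons_cons] at hl
      exact mem_of_getLast?_eq hl
  have hnd := hp.2.2.2
  rw [List.nodup_append] at hnd
  exact hnd.2.2 y hy1 y (List.mem_cons_of_mem _ hy2) rfl


lemma two_paths_half [Fintype V] {A : V → V → Prop} {r : V} {d : PreDecomp V}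
    (X : Set V) (hXN : ∀ v ∈ X, v ∉ d.N) {x u : V} (hx : x ∈ d.N)
    (hu : u ∈ d.B x) (hne : u ≠ x) (huX : u ∉ X) {p q : List V}
    (hp : IsPath (Asub A (Bstar d r x)) p x u)
    (hq : IsPath (Asub A (Bstar d r x)) q x u)
    (hdisj : IntDisj p q x u)
    (hle : {v ∈ X | v ∈ p}.ncard ≤ {v ∈ X | v ∈ q}.ncard) :
    ∃ s Z, IsWalk A s x u ∧ Z ⊆ X ∧ Z ⊆ Bstar d r x ∧
      Z ∩ PartClass A d r x u = ∅ ∧ 2 * {v ∈ X | v ∈ s}.ncard ≤ Z.ncard := by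
  have hxX : x ∉ X := fun hmem => hXN x hmem hx
  have hxu : x ≠ u := fun e => hne e.symm
  refine ⟨p, {v ∈ X | v ∈ p} ∪ {v ∈ X | v ∈ q}, ?_, ?_, ?_, ?_, ?_⟩
  · exact ⟨hp.1.imp (fun a b hab => hab.1), hp.2.1, hp.2.2.1⟩
  · rintro v (⟨hv, -⟩ | ⟨hv, -⟩) <;> exact hv
  · rintro v (⟨-, hv⟩ | ⟨-, hv⟩)
    · exact path_mem_sub hp hxu v hv
    · exact path_mem_sub hq hxu v hv
  · apply Set.eq_empty_iff_forall_notMem.mpr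
    rintro v ⟨(⟨-, hv⟩ | ⟨-, hv⟩), hvP⟩
    · exact prune hu hp v hv hvP
    · exact prune hu hq v hv hvP
  · have hd : Disjoint {v ∈ X | v ∈ p} {v ∈ X | v ∈ q} := by
      rw [Set.disjoint_left]
      rintro v ⟨hvX, hvp⟩ ⟨-, hvq⟩
      rcases hdisj v hvp hvq with rfl | rfl
      · exact hxX hvX
      · exact huX hvX
    rw [Set.ncard_union_eq hd (Set.toFinite _) (Set.toFinite _)]
    omega

lemma segment_half [Fintype V] {A : V → V → Prop} {r : V} {d : PreDecomp V}
    (h : IsCutDecomp A r d) (X : Set V) (hXN : ∀ v ∈ X, v ∉ d.N) {x u : V}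
    (hx : x ∈ d.N) (hu : u ∈ d.B x) (hne : u ≠ x) (huX : u ∉ X) :
    ∃ s Z, IsWalk A s x u ∧ Z ⊆ X ∧ Z ⊆ Bstar d r x ∧
      Z ∩ PartClass A d r x u = ∅ ∧ 2 * {v ∈ X | v ∈ s}.ncard ≤ Z.ncard := by
  have hu0 := hu
  rw [h.diblock_eq x hx] at hu
  rcases hu with (hbi | heq) | harc
  · obtain ⟨p, q, -, hp, hq, hdisj⟩ := hbi
    rcases le_total ({v ∈ X | v ∈ p}.ncard) ({v ∈ X | v ∈ q}.ncard) with hle | hle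
    · exact two_paths_half X hXN hx hu0 hne huX hp hq hdisj hle
    · exact two_paths_half X hXN hx hu0 hne huX hq hp (fun v hvq hvp => hdisj v hvp hvq) hle
  · exact absurd heq hne
  · refine ⟨[x, u], ∅, ⟨?_, rfl, rfl⟩, by simp, by simp, by simp, ?_⟩
    · simp only [List.Chain', List.isChain_cons_cons, List.isChain_singleton, and_true]
      exact harc.1
    · have : {v ∈ X | v ∈ [x, u]} = ∅ := by
        ext v; simp only [Set.mem_setOf_eq, List.mem_cons, List.mem_singleton,
          Set.mem_empty_iff_false, iff_false, not_and]
        rintro hv (rfl | rfl | hf)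
        · exact hXN v hv hx
        · exact huX hv
        · exact (List.not_mem_nil hf).elim
      rw [this]
      simp

lemma chain_half [Fintype V] {A : V → V → Prop} {r : V} {d : PreDecomp V}
    (h : IsCutDecomp A r d) (X : Set V) (hXN : ∀ v ∈ X, v ∉ d.N) :
    ∀ x, Anc d r r x → x ∈ d.N →
      ∃ p Z, IsWalk A p r x ∧ Z ⊆ X ∧ Z ∩ Bstar d r x = ∅ ∧
        2 * {v ∈ X | v ∈ p}.ncard ≤ Z.ncard := by
  intro x hanc
  unfold Anc at hanc
  induction hanc using Relation.ReflTransGen.head_induction_on with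
  | refl =>
    intro _
    have hre : {v ∈ X | v ∈ [r]} = ∅ := by
      ext v; simp only [Set.mem_setOf_eq, List.mem_singleton, Set.mem_empty_iff_false,
        iff_false, not_and]
      rintro hv rfl
      exact hXN v hv h.root_mem
    refine ⟨[r], ∅, ⟨List.isChain_singleton r, rfl, rfl⟩, by simp, by simp, by rw [hre]; simp⟩
  | @head a c hstep hrt ih =>
    intro haN
    obtain ⟨-, hanr, hpar⟩ := hstep
    have hcN : c ∈ d.N := hpar ▸ h.parent_mem a haN hanr
    have hchild : IsChild d r a c := ⟨haN, hanr, hpar⟩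
    obtain ⟨haB, hane, -⟩ := (h.child_iff c hcN a).mp hchild
    obtain ⟨p, Z, hw, hZX, hZB, hcard⟩ := ih hcN
    have haX : a ∉ X := fun hmem => hXN a hmem haN
    obtain ⟨s, Z₂, hws, hZ₂X, hZ₂B, hZ₂P, hcard₂⟩ := segment_half h X hXN hcN haB hane haX
    refine ⟨p ++ s.tail, Z ∪ Z₂, walk_append hw hws, Set.union_subset hZX hZ₂X, ?_, ?_⟩
    · have hBa : Bstar d r a = insert a (PartClass A d r c a) := h.child_part c hcN a hchild
      have hsub : Bstar d r a ⊆ Bstar d r c := Bstar_child_subset hchild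
      apply Set.eq_empty_iff_forall_notMem.mpr
      rintro v ⟨hvZ | hvZ₂, hvB⟩
      · exact Set.eq_empty_iff_forall_notMem.mp hZB v ⟨hvZ, hsub hvB⟩
      · rw [hBa] at hvB
        rcases hvB with rfl | hvP
        · exact haX (hZ₂X hvZ₂)
        · exact Set.eq_empty_iff_forall_notMem.mp hZ₂P v ⟨hvZ₂, hvP⟩
    · have hsubset : {v ∈ X | v ∈ p ++ s.tail} ⊆ {v ∈ X | v ∈ p} ∪ {v ∈ X | v ∈ s} := by
        rintro v ⟨hvX, hvm⟩
        rcases List.mem_append.mp hvm with hl | hr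
        · exact Or.inl ⟨hvX, hl⟩
        · exact Or.inr ⟨hvX, List.mem_of_mem_tail hr⟩
      have h1 : {v ∈ X | v ∈ p ++ s.tail}.ncard ≤
          {v ∈ X | v ∈ p}.ncard + {v ∈ X | v ∈ s}.ncard :=
        le_trans (Set.ncard_le_ncard hsubset (Set.toFinite _)) (Set.ncard_union_le _ _)
      have hdisjZ : Disjoint Z Z₂ := Set.disjoint_left.mpr fun v hv hv2 =>
        Set.eq_empty_iff_forall_notMem.mp hZB v ⟨hv, hZ₂B hv2⟩
      have h2 : (Z ∪ Z₂).ncard = Z.ncard + Z₂.ncard :=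
        Set.ncard_union_eq hdisjZ (Set.toFinite _) (Set.toFinite _)
      omega

/-- for any target `u` and any set `X` of non-bottleneck
vertices avoiding `u`, there is a path from `r` to `u` meeting at most half
of `X`. -/
theorem cutDecomp_avoid_half {V : Type*} [Fintype V]
    (A : V → V → Prop) (r : V) (hreach : ∀ v, Reaches A r v)
    (d : PreDecomp V) (h : IsCutDecomp A r d)
    (u : V) (X : Set V) (hX : X ⊆ (d.N ∪ {u})ᶜ) :
    ∃ p, IsPath A p r u ∧ 2 * {x ∈ X | x ∈ p}.ncard ≤ X.ncard := by
  have hXN : ∀ v ∈ X, v ∉ d.N := fun v hv hn => hX hv (Set.mem_union_left _ hn)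
  have huX : u ∉ X := fun hv => hX hv (Set.mem_union_right _ rfl)
  have hmem : u ∈ Bstar d r r := by rw [h.cover]; trivial
  obtain ⟨x, hxN, hanc, huB⟩ := hmem
  obtain ⟨p, Z, hw, hZX, hZB, hcard⟩ := chain_half h X hXN x hanc hxN
  by_cases hue : u = x
  · subst hue
    obtain ⟨q, hq, hsub⟩ := walk_to_path p.length p r u le_rfl hw
    refine ⟨q, hq, ?_⟩
    have hs : {v ∈ X | v ∈ q} ⊆ {v ∈ X | v ∈ p} := fun v ⟨hvX, hvq⟩ => ⟨hvX, hsub v hvq⟩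
    have h1 := Set.ncard_le_ncard hs (Set.toFinite _)
    have h2 := Set.ncard_le_ncard hZX (Set.toFinite _)
    omega
  · obtain ⟨s, Z₂, hws, hZ₂X, hZ₂B, -, hcard₂⟩ := segment_half h X hXN hxN huB hue huX
    have hwfull := walk_append hw hws
    obtain ⟨q, hq, hsub⟩ := walk_to_path (p ++ s.tail).length _ r u le_rfl hwfull
    refine ⟨q, hq, ?_⟩
    have hs : {v ∈ X | v ∈ q} ⊆ {v ∈ X | v ∈ p} ∪ {v ∈ X | v ∈ s} := by
      rintro v ⟨hvX, hvq⟩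
      rcases List.mem_append.mp (hsub v hvq) with hl | hr
      · exact Or.inl ⟨hvX, hl⟩
      · exact Or.inr ⟨hvX, List.mem_of_mem_tail hr⟩
    have h1 : {v ∈ X | v ∈ q}.ncard ≤ {v ∈ X | v ∈ p}.ncard + {v ∈ X | v ∈ s}.ncard :=
      le_trans (Set.ncard_le_ncard hs (Set.toFinite _)) (Set.ncard_union_le _ _)
    have hdisjZ : Disjoint Z Z₂ := Set.disjoint_left.mpr fun v hv hv2 =>
      Set.eq_empty_iff_forall_notMem.mp hZB v ⟨hv, hZ₂B hv2⟩
    have h2 : (Z ∪ Z₂).ncard = Z.ncard + Z₂.ncard :=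
      Set.ncard_union_eq hdisjZ (Set.toFinite _) (Set.toFinite _)
    have h3 : Z ∪ Z₂ ⊆ X := Set.union_subset hZX hZ₂X
    have h4 := Set.ncard_le_ncard h3 (Set.toFinite _)
    omega


end CutPaper
end

section
/- Let (T̂, {B_x}) be the cut decomposition of a digraph D rooted at s such that T̂ has height d, and let T be an out-tree in D rooted at some vertex r with ℓ leaves. Then D contains an out-tree rooted at s with at least (ℓ - d)/2 leaves. -/
namespace CutPaper

variable {V : Type*}

/-! ### Auxiliary list and path lemmas -/

/-- The edge relation of a list: `u` is immediately followed by `w`. -/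
def pedge (p : List V) (u w : V) : Prop := ∃ l₁ l₂, p = l₁ ++ u :: w :: l₂

/-- vertex set of a list -/
def vset (p : List V) : Set V := {a | a ∈ p}

lemma pedge_cons {p : List V} {u w c : V} (h : pedge p u w) : pedge (c :: p) u w := by
  obtain ⟨l₁, l₂, rfl⟩ := h
  exact ⟨c :: l₁, l₂, rfl⟩

lemma chain'_pedge (p : List V) : List.Chain' (pedge p) p := by
  induction p with
  | nil => exact List.isChain_nil
  | cons a rest ih =>
    cases rest with
    | nil => exact List.isChain_singleton _
    | cons b r =>
      refine List.isChain_cons_cons.2 ⟨⟨[], r, rfl⟩, ?_⟩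
      exact List.IsChain.imp (fun a b h => pedge_cons h) ih

lemma pedge_rel {R : V → V → Prop} {p : List V} {u w : V}
    (hc : List.Chain' R p) (h : pedge p u w) : R u w := by
  obtain ⟨l₁, l₂, rfl⟩ := h
  have : List.Chain' R (u :: w :: l₂) := hc.suffix ⟨l₁, rfl⟩
  exact (List.isChain_cons_cons.1 this).1

lemma pedge_mem {p : List V} {u w : V} (h : pedge p u w) : u ∈ p ∧ w ∈ p := by
  obtain ⟨l₁, l₂, rfl⟩ := h
  constructor <;> simp

/-- a non-head member of a list has a predecessor -/
lemma exists_pred_of_mem {p : List V} {x v : V} (hv : v ∈ p) (hx : p.head? = some x)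
    (hne : v ≠ x) : ∃ u, pedge p u v := by
  obtain ⟨a, b, rfl⟩ := List.append_of_mem hv
  cases a with
  | nil => simp at hx; exact absurd hx hne
  | cons c a' =>
    obtain ⟨a'', u, hau⟩ : ∃ a'' u, c :: a' = a'' ++ [u] := by
      rcases List.eq_nil_or_concat (c :: a') with h | ⟨a'', u, h⟩
      · simp at h
      · exact ⟨a'', u, by simpa using h⟩
    exact ⟨u, a'', b, by rw [show c :: a' ++ v :: b = (c :: a') ++ v :: b from rfl, hau]; simp⟩

/-- for a `Nodup` list, decompositions at a fixed element are unique -/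
lemma nodup_split_unique {p a b c d : List V} {v : V} (hn : p.Nodup)
    (h1 : p = a ++ v :: b) (h2 : p = c ++ v :: d) : a = c ∧ b = d := by
  have h := h1.symm.trans h2
  rcases List.append_eq_append_iff.1 h with ⟨e, hc, hb⟩ | ⟨e, hc, hb⟩
  · cases e with
    | nil => simp at hc hb; exact ⟨hc.symm, hb⟩
    | cons f e' =>
      have hf : v = f := by simpa using congrArg List.head? hb
      subst hf
      have hvb : v ∈ b := by
        have hb' : b = e' ++ v :: d := by simpa using hb
        simp [hb']
      rw [h1] at hn
      exact absurd hvb (List.nodup_cons.1 (List.nodup_append.1 hn).2.1).1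
  · cases e with
    | nil => simp at hc hb; exact ⟨hc, hb.symm⟩
    | cons f e' =>
      have hf : v = f := by simpa using congrArg List.head? hb
      subst hf
      have hvd : v ∈ d := by
        have hb' : d = e' ++ v :: b := by simpa using hb
        simp [hb']
      rw [h2] at hn
      exact absurd hvd (List.nodup_cons.1 (List.nodup_append.1 hn).2.1).1

lemma pedge_unique {p : List V} {u u' v : V} (hn : p.Nodup)
    (h : pedge p u v) (h' : pedge p u' v) : u = u' := by
  obtain ⟨l₁, l₂, h1⟩ := h
  obtain ⟨l₁', l₂', h2⟩ := h'
  have e1 : p = (l₁ ++ [u]) ++ v :: l₂ := by simp [h1]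
  have e2 : p = (l₁' ++ [u']) ++ v :: l₂' := by simp [h2]
  have := (nodup_split_unique hn e1 e2).1
  have := congrArg List.getLast? this
  simpa using this

lemma not_pedge_head {p : List V} {x u : V} (hn : p.Nodup) (hx : p.head? = some x) :
    ¬ pedge p u x := by
  rintro ⟨l₁, l₂, rfl⟩
  cases l₁ with
  | nil =>
    simp at hx
    subst hx
    simp at hn
  | cons a l₁' =>
    have : a = x := by simpa using hx
    subst this
    exact (List.nodup_cons.1 hn).1 (by simp)

lemma not_pedge_getLast {p : List V} {v w : V} (hn : p.Nodup) (hv : p.getLast? = some v) :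
    ¬ pedge p v w := by
  rintro ⟨l₁, l₂, rfl⟩
  have : (l₁ ++ v :: w :: l₂).getLast? = (w :: l₂).getLast? := by
    rw [show l₁ ++ v :: w :: l₂ = (l₁ ++ [v]) ++ (w :: l₂) by simp, List.getLast?_append]
    cases h : (w :: l₂).getLast? with
    | none => simp at h
    | some z => simp
  rw [this] at hv
  have hvmem : v ∈ w :: l₂ := List.mem_of_mem_getLast? hv
  exact (List.nodup_cons.1 (List.nodup_append.1 hn).2.1).1 hvmem

lemma isPath_prefix_s15 {A : V → V → Prop} {p l₁ l₂ : List V} {x v w : V}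
    (hp : IsPath A p x v) (hd : p = l₁ ++ w :: l₂) : IsPath A (l₁ ++ [w]) x w := by
  obtain ⟨hc, hh, hl, hn⟩ := hp
  have hpre : (l₁ ++ [w]) <+: p := ⟨l₂, by simp [hd]⟩
  refine ⟨hc.prefix hpre, ?_, by simp [List.getLast?_concat], hn.sublist hpre.sublist⟩
  rw [hd] at hh
  rw [List.head?_append] at hh ⊢
  simpa using hh

lemma isPath_suffix_s15 {A : V → V → Prop} {p l₁ l₂ : List V} {x v w : V}
    (hp : IsPath A p x v) (hd : p = l₁ ++ w :: l₂) : IsPath A (w :: l₂) w v := by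
  obtain ⟨hc, hh, hl, hn⟩ := hp
  refine ⟨hc.suffix ⟨l₁, hd.symm⟩, rfl, ?_, ?_⟩
  · rw [hd, List.getLast?_append] at hl
    cases h : (w :: l₂).getLast? with
    | none => simp at h
    | some z => rw [h] at hl; simpa using hl
  · rw [hd] at hn
    exact hn.sublist (by simp)

lemma lastTouch_unique {B : Set V} {p : List V} {x₁ x₂ : V}
    (h1 : LastTouch B p x₁) (h2 : LastTouch B p x₂) : x₁ = x₂ := by
  obtain ⟨a, b, hab, hx1, hb⟩ := h1
  obtain ⟨c, dd, hcd, hx2, hd⟩ := h2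
  have h := hab.symm.trans hcd
  rcases List.append_eq_append_iff.1 h with ⟨e, hc, hbb⟩ | ⟨e, hc, hbb⟩
  · cases e with
    | nil => simpa using (congrArg List.head? hbb)
    | cons f e' =>
      have hf : x₁ = f := by simpa using congrArg List.head? hbb
      subst hf
      have hm : x₂ ∈ b := by
        have hb' : b = e' ++ x₂ :: dd := by simpa using hbb
        simp [hb']
      exact absurd hx2 (hb _ hm)
  · cases e with
    | nil => simpa using (congrArg List.head? hbb).symm
    | cons f e' =>
      have hf : x₂ = f := by simpa using congrArg List.head? hbb
      subst hf
      have hm : x₁ ∈ dd := by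
        have hb' : dd = e' ++ x₁ :: b := by simpa using hbb
        simp [hb']
      exact absurd hx1 (hd _ hm)

lemma lastTouch_exists {B : Set V} {p : List V} (h : ∃ z ∈ p, z ∈ B) :
    ∃ w, LastTouch B p w := by
  induction p using List.reverseRecOn with
  | nil => simp at h
  | append_singleton l a ih =>
    by_cases ha : a ∈ B
    · exact ⟨a, l, [], rfl, ha, by simp⟩
    · obtain ⟨z, hz, hzB⟩ := h
      have hz' : z ∈ l := by
        rcases List.mem_append.1 hz with h' | h'
        · exact h'
        · simp at h'; subst h'; exact absurd hzB ha
      obtain ⟨w, l₁, l₂, hdec, hw, hl₂⟩ := ih ⟨z, hz', hzB⟩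
      refine ⟨w, l₁, l₂ ++ [a], by simp [hdec], hw, ?_⟩
      intro y hy
      rcases List.mem_append.1 hy with h' | h'
      · exact hl₂ y h'
      · simp at h'; subst h'; exact ha

lemma mem_of_chain'_cons {R : V → V → Prop} {a : V} {l : List V} {b : V}
    (hc : List.Chain' R (a :: l)) (hb : b ∈ l) : ∃ c, R c b := by
  induction l generalizing a with
  | nil => simp at hb
  | cons x t ih =>
    rcases List.mem_cons.1 hb with rfl | hb'
    · exact ⟨a, (List.isChain_cons_cons.1 hc).1⟩
    · exact ih (List.isChain_cons_cons.1 hc).2 hb'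

lemma isPath_head_cons {A : V → V → Prop} {p : List V} {x v : V} (hp : IsPath A p x v) :
    ∃ t, p = x :: t := by
  obtain ⟨_, hh, _, _⟩ := hp
  cases p with
  | nil => simp at hh
  | cons a t => simp at hh; exact ⟨t, by rw [hh]⟩

lemma isPath_last_mem {A : V → V → Prop} {p : List V} {x v : V} (hp : IsPath A p x v) :
    v ∈ p := List.mem_of_mem_getLast? hp.2.2.1

lemma chain'_mono_mem {R R' : V → V → Prop} {l : List V} (h : List.Chain' R l)
    (h2 : ∀ a b, R a b → b ∈ l → R' a b) : List.Chain' R' l := by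
  induction l with
  | nil => exact List.isChain_nil
  | cons a t ih =>
    cases t with
    | nil => exact List.isChain_singleton _
    | cons b t' =>
      simp only [List.Chain', List.isChain_cons_cons] at h ⊢
      exact ⟨h2 _ _ h.1 (by simp), ih h.2 (fun a b hr hm => h2 a b hr (by simp [hm]))⟩

/-- Absorbing an out-tree into a path ending at its root. -/
lemma absorb {A T : V → V → Prop} {S : Set V} {r : V} (hT : IsOutTree A T S r)
    {p : List V} {x : V} (hp : IsPath A p x r) :
    ∃ T₂ : V → V → Prop, ∃ S₂ : Set V,
      IsOutTree A T₂ S₂ x ∧ leaves T S \ (vset p \ {r}) ⊆ leaves T₂ S₂ := by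
  obtain ⟨hc, hh, hl, hn⟩ := hp
  set T₂ : V → V → Prop := fun u w => pedge p u w ∨ (T u w ∧ w ∉ p) with hT₂
  refine ⟨T₂, S ∪ vset p, ?_, ?_⟩
  · constructor
    · rintro u w (he | ⟨ht, _⟩)
      · exact pedge_rel hc he
      · exact hT.sub u w ht
    · rintro u w (he | ⟨ht, _⟩)
      · exact ⟨Or.inr (pedge_mem he).1, Or.inr (pedge_mem he).2⟩
      · exact ⟨Or.inl (hT.mem u w ht).1, Or.inl (hT.mem u w ht).2⟩
    · exact Or.inr (List.mem_of_mem_head? hh)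
    · rintro u (he | ⟨ht, hw⟩)
      · exact not_pedge_head hn hh he
      · exact hw (List.mem_of_mem_head? hh)
    · intro v hv hvx
      by_cases hvp : v ∈ p
      · obtain ⟨u, he⟩ := exists_pred_of_mem hvp hh hvx
        refine ⟨u, Or.inl he, ?_⟩
        rintro u' (he' | ⟨ht', hnp⟩)
        · exact (pedge_unique hn he' he).symm ▸ rfl
        · exact absurd hvp hnp
      · have hvS : v ∈ S := by
          rcases hv with h' | h'
          · exact h'
          · exact absurd h' hvp
        have hvr : v ≠ r := by
          rintro rfl
          exact hvp (List.mem_of_mem_getLast? hl)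
        obtain ⟨u, hu, huniq⟩ := hT.unique_in v hvS hvr
        refine ⟨u, Or.inr ⟨hu, hvp⟩, ?_⟩
        rintro u' (he' | ⟨ht', _⟩)
        · exact absurd (pedge_mem he').2 hvp
        · exact huniq u' ht'
    · intro v hv
      by_cases hvp : v ∈ p
      · obtain ⟨a, b, hd⟩ := List.append_of_mem hvp
        obtain ⟨_, hh2, hl2, hn2⟩ := isPath_prefix_s15 ⟨hc, hh, hl, hn⟩ hd
        refine ⟨a ++ [v], ?_, hh2, hl2, hn2⟩
        exact List.IsChain.imp (fun a b h => Or.inl h)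
          ((chain'_pedge p).prefix ⟨b, by simp [hd]⟩)
      · have hvS : v ∈ S := by
          rcases hv with h' | h'
          · exact h'
          · exact absurd h' hvp
        obtain ⟨q, hq⟩ := hT.reach v hvS
        have hrq : r ∈ q := by
          obtain ⟨t, ht⟩ := isPath_head_cons hq
          simp [ht]
        obtain ⟨w, q₁, q₂, hdq, hwp, hq₂⟩ :=
          lastTouch_exists (B := vset p) ⟨r, hrq, List.mem_of_mem_getLast? hl⟩
        have hwp' : w ∈ p := hwp
        obtain ⟨a, b, hd⟩ := List.append_of_mem hwp'
        obtain ⟨_, hh2, hl2, hn2⟩ := isPath_prefix_s15 ⟨hc, hh, hl, hn⟩ hd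
        have hq₂ne : q₂ ≠ [] := by
          rintro rfl
          have : q.getLast? = some w := by
            rw [hdq]; simpa using List.getLast?_concat q₁
          rw [hq.2.2.1] at this
          have : v = w := by simpa using this
          exact hvp (this ▸ hwp')
        obtain ⟨cfst, q₂', hq₂'⟩ : ∃ c q₂', q₂ = c :: q₂' := by
          cases q₂ with
          | nil => exact absurd rfl hq₂ne
          | cons c q₂' => exact ⟨c, q₂', rfl⟩
        have hsufq : List.Chain' T (w :: q₂) := hq.1.suffix ⟨q₁, hdq.symm⟩
        refine ⟨(a ++ [w]) ++ q₂, ?_, ?_, ?_, ?_⟩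
        · simp only [List.Chain']; rw [List.isChain_append]
          refine ⟨?_, ?_, ?_⟩
          · exact List.IsChain.imp (fun a b h => Or.inl h)
              ((chain'_pedge p).prefix ⟨b, by simp [hd]⟩)
          · refine chain'_mono_mem (hsufq.tail) ?_
            intro a' b' hr hm
            exact Or.inr ⟨hr, hq₂ b' hm⟩
          · intro z hz y hy
            rw [hl2] at hz
            simp at hz
            subst hz
            rw [hq₂'] at hy
            simp at hy
            subst hy
            refine Or.inr ⟨?_, hq₂ _ (by simp [hq₂'])⟩
            rw [hq₂'] at hsufq
            exact (List.isChain_cons_cons.1 hsufq).1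
        · rw [List.head?_append, hh2]
          rfl
        · have hlq : q.getLast? = some v := hq.2.2.1
          rw [hdq, show q₁ ++ w :: q₂ = (q₁ ++ [w]) ++ q₂ by simp,
            List.getLast?_append] at hlq
          cases hz : q₂.getLast? with
          | none =>
            rw [List.getLast?_eq_none_iff] at hz
            exact absurd hz hq₂ne
          | some z =>
            rw [hz] at hlq
            simp at hlq
            rw [List.getLast?_append, hz]
            simpa using hlq
        · rw [List.nodup_append]
          refine ⟨hn2, ?_, ?_⟩
          · have : q₂.Sublist q := by rw [hdq]; simp
            exact hq.2.2.2.sublist this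
          · intro z hz z' hz2 hzz
            subst hzz
            have hzp : z ∈ p := by
              have : z ∈ a ++ [w] := hz
              have hsub : (a ++ [w]) <+: p := ⟨b, by simp [hd]⟩
              exact hsub.sublist.mem this
            exact hq₂ z hz2 hzp
  · rintro v ⟨⟨hvS, hleaf⟩, hvnot⟩
    refine ⟨Or.inl hvS, ?_⟩
    rintro u (he | ⟨ht, _⟩)
    · have hvp : v ∈ p := (pedge_mem he).1
      have hvr : v = r := by
        by_contra h'
        exact hvnot ⟨hvp, h'⟩
      subst hvr
      exact not_pedge_getLast hn hl he
    · exact hleaf u ht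

lemma chain'_mono_mem₂ {R R' : V → V → Prop} {l : List V} (h : List.Chain' R l)
    (h2 : ∀ a b, R a b → a ∈ l → b ∈ l → R' a b) : List.Chain' R' l := by
  induction l with
  | nil => exact List.isChain_nil
  | cons a t ih =>
    cases t with
    | nil => exact List.isChain_singleton _
    | cons b t' =>
      simp only [List.Chain', List.isChain_cons_cons] at h ⊢
      exact ⟨h2 _ _ h.1 (by simp) (by simp),
        ih h.2 (fun a b hr hm hm' => h2 a b hr (by simp [hm]) (by simp [hm']))⟩

/-! ### Decomposition lemmas -/

section Decomp

variable (A : V → V → Prop) (s : V) (d : PreDecomp V)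

/-- every chain of children starting at `x` has at most `n` nodes -/
def chainBound (x : V) (n : ℕ) : Prop :=
  ∀ q : List V, List.Chain' (fun a b => IsChild d s b a) q → q.head? = some x → q.length ≤ n

variable {A s d}

lemma chainBound_pos {x : V} {n : ℕ} (h : chainBound s d x n) : 1 ≤ n := by
  have := h [x] (List.isChain_singleton _) (by simp)
  simpa using this

lemma chainBound_child {x y : V} {n : ℕ} (hb : chainBound s d x n)
    (hch : IsChild d s y x) : chainBound s d y (n - 1) := by
  intro q hq hhq
  obtain ⟨t, rfl⟩ : ∃ t, q = y :: t := by
    cases q with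
    | nil => simp at hhq
    | cons a t => simp at hhq; exact ⟨t, by rw [hhq]⟩
  have := hb (x :: y :: t) (List.isChain_cons_cons.2 ⟨hch, hq⟩) (by simp)
  simp at this ⊢
  omega

variable (h : IsCutDecomp A s d)
include h

lemma mem_B_self_s15 {x : V} (hx : x ∈ d.N) : x ∈ d.B x := by
  rw [h.diblock_eq x hx]
  exact Or.inl (Or.inr rfl)

lemma mem_bstar_self {x : V} (hx : x ∈ d.N) : x ∈ Bstar d s x :=
  ⟨x, hx, Relation.ReflTransGen.refl, mem_B_self_s15 h hx⟩

lemma bstar_mono {x y : V} (hch : IsChild d s y x) :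
    Bstar d s y ⊆ Bstar d s x := by
  rintro v ⟨z, hz, anc, hB⟩
  exact ⟨z, hz, Relation.ReflTransGen.tail anc hch, hB⟩

lemma child_mem_B {x y : V} (hx : x ∈ d.N) (hch : IsChild d s y x) : y ∈ d.B x :=
  ((h.child_iff x hx y).1 hch).1

lemma child_ne {x y : V} (hx : x ∈ d.N) (hch : IsChild d s y x) : y ≠ x :=
  ((h.child_iff x hx y).1 hch).2.1

lemma class_of_not_B {x v : V} (hx : x ∈ d.N) (hv : v ∈ Bstar d s x)
    (hvB : v ∉ d.B x) : ∃ y, IsChild d s y x ∧ v ∈ PartClass A d s x y := by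
  obtain ⟨z, hzN, anc, hB⟩ := hv
  rcases Relation.ReflTransGen.cases_tail anc with heq | ⟨c, hzc, hcx⟩
  · subst heq; exact absurd hB hvB
  · have hch : IsChild d s c x := hcx
    have hvy : v ∈ Bstar d s c := ⟨z, hzN, hzc, hB⟩
    rw [h.child_part x hx c hch] at hvy
    rcases hvy with rfl | hvy
    · exact absurd (child_mem_B h hx hch) hvB
    · exact ⟨c, hch, hvy⟩

lemma diblock_two_paths {x v : V} (hx : x ∈ d.N) (hv : v ∈ d.B x) :
    ∃ p q, IsPath (Asub A (Bstar d s x)) p x v ∧ IsPath (Asub A (Bstar d s x)) q x v ∧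
      ∀ w, w ∈ p → w ∈ q → w = x ∨ w = v := by
  rw [h.diblock_eq x hx] at hv
  rcases hv with (hbi | heq) | hedge
  · obtain ⟨p, q, _, hp, hq, hdisj⟩ := hbi
    exact ⟨p, q, hp, hq, fun w hwp hwq => hdisj w hwp hwq⟩
  · simp at heq
    subst heq
    exact ⟨[v], [v], ⟨List.isChain_singleton _, rfl, rfl, by simp⟩, ⟨List.isChain_singleton _, rfl, rfl, by simp⟩,
      fun w hw _ => by simp at hw; exact Or.inl hw⟩
  · by_cases hvx : v = x
    · subst hvx
      exact ⟨[v], [v], ⟨List.isChain_singleton _, rfl, rfl, by simp⟩, ⟨List.isChain_singleton _, rfl, rfl, by simp⟩,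
        fun w hw _ => by simp at hw; exact Or.inl hw⟩
    · have hedge' : Asub A (Bstar d s x) x v := hedge
      refine ⟨[x, v], [x, v], ?_, ?_, fun w hw _ => by simpa using hw⟩ <;>
        exact ⟨by simp [List.Chain', hedge'], rfl, rfl, by simp [Ne.symm hvx]⟩

lemma path_avoid_class {x y : V} {p₀ : List V} (hx : x ∈ d.N) (hch : IsChild d s y x)
    (hp₀ : IsPath (Asub A (Bstar d s x)) p₀ x y) :
    ∀ w ∈ p₀, w ∈ Bstar d s y → w = y := by
  intro w hwmem hwB
  by_contra hwy
  rw [h.child_part x hx y hch] at hwB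
  rcases hwB with heq | hwPC
  · exact hwy heq
  · obtain ⟨a, b, hd⟩ := List.append_of_mem hwmem
    have hpre := isPath_prefix_s15 hp₀ hd
    obtain ⟨q₁, q₂, hdec, _, _⟩ := hwPC.2.2 _ hpre
    have hymem : y ∈ a ++ [w] := by rw [hdec]; simp
    have hya : y ∈ a := by
      rcases List.mem_append.1 hymem with h' | h'
      · exact h'
      · simp at h'; exact absurd h'.symm hwy
    have hnp := hp₀.2.2.2
    rw [hd] at hnp
    have hlast := hp₀.2.2.1
    rw [hd] at hlast
    cases hb : b with
    | nil =>
      rw [hb] at hlast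
      have : (a ++ [w]).getLast? = some y := hlast
      rw [List.getLast?_concat] at this
      simp at this
      exact hwy this
    | cons c b' =>
      rw [hb] at hlast
      have : (a ++ w :: c :: b').getLast? = (c :: b').getLast? := by
        rw [show a ++ w :: c :: b' = (a ++ [w]) ++ (c :: b') by simp, List.getLast?_append]
        cases h' : (c :: b').getLast? with
        | none => simp at h'
        | some z => simp
      rw [this] at hlast
      have hyb : y ∈ c :: b' := List.mem_of_mem_getLast? hlast
      rw [hb] at hnp
      have hdisj := (List.nodup_append.1 hnp).2.2
      exact hdisj y hya y (by simp [hyb]) rfl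

lemma concat_path {x y v : V} {p₀ t : List V} (hx : x ∈ d.N) (hch : IsChild d s y x)
    (hp₀ : IsPath (Asub A (Bstar d s x)) p₀ x y)
    (hsuf : IsPath (Asub A (Bstar d s y)) (y :: t) y v)
    (htne : t ≠ []) :
    IsPath (Asub A (Bstar d s x)) (p₀ ++ t) x v := by
  obtain ⟨c, t₂, rfl⟩ : ∃ c t₂, t = c :: t₂ := by
    cases t with
    | nil => exact absurd rfl htne
    | cons c t₂ => exact ⟨c, t₂, rfl⟩
  have hup : ∀ a b, Asub A (Bstar d s y) a b → Asub A (Bstar d s x) a b := fun a b hab =>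
    ⟨hab.1, bstar_mono h hch hab.2.1, bstar_mono h hch hab.2.2⟩
  have hchain' : List.Chain' (Asub A (Bstar d s x)) (y :: c :: t₂) :=
    List.IsChain.imp hup hsuf.1
  refine ⟨?_, ?_, ?_, ?_⟩
  · simp only [List.Chain']; rw [List.isChain_append]
    refine ⟨hp₀.1, (List.isChain_cons_cons.1 hchain').2, ?_⟩
    intro z hz w hw
    rw [hp₀.2.2.1] at hz
    simp at hz hw
    subst hz; subst hw
    exact (List.isChain_cons_cons.1 hchain').1
  · rw [List.head?_append, hp₀.2.1]; rfl
  · have hlast : (c :: t₂).getLast? = some v := by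
      have hv := hsuf.2.2.1
      rw [show (y :: c :: t₂) = [y] ++ (c :: t₂) by simp, List.getLast?_append] at hv
      cases h' : (c :: t₂).getLast? with
      | none => simp at h'
      | some z => rw [h'] at hv; simpa using hv
    rw [List.getLast?_append, hlast]; rfl
  · rw [List.nodup_append]
    refine ⟨hp₀.2.2.2, (List.nodup_cons.1 hsuf.2.2.2).2, ?_⟩
    intro z hzp z' hzt hzz
    subst hzz
    have hzY : z ∈ Bstar d s y := by
      obtain ⟨cc, hcc⟩ := mem_of_chain'_cons hsuf.1 hzt
      exact hcc.2.2
    have hzy : z = y := path_avoid_class h hx hch hp₀ z hzp hzY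
    subst hzy
    exact (List.nodup_cons.1 hsuf.2.2.2).1 hzt

lemma two_paths [Finite V] :
    ∀ n (x : V), x ∈ d.N → chainBound s d x n → ∀ v ∈ Bstar d s x,
      (∃ p₀, IsPath (Asub A (Bstar d s x)) p₀ x v) →
      ∃ p q, IsPath (Asub A (Bstar d s x)) p x v ∧ IsPath (Asub A (Bstar d s x)) q x v ∧
        ((vset p ∩ vset q) \ {v}).ncard ≤ n := by
  intro n
  induction n with
  | zero =>
    intro x _ hcb
    have := chainBound_pos hcb
    omega
  | succ n ih =>
    intro x hx hcb v hv hex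
    by_cases hvB : v ∈ d.B x
    · obtain ⟨p, q, hp, hq, hdisj⟩ := diblock_two_paths h hx hvB
      refine ⟨p, q, hp, hq, ?_⟩
      have hsub : (vset p ∩ vset q) \ {v} ⊆ {x} := by
        rintro w ⟨⟨hwp, hwq⟩, hwv⟩
        rcases hdisj w hwp hwq with h' | h'
        · simp [h']
        · exact absurd h' hwv
      calc ((vset p ∩ vset q) \ {v}).ncard ≤ ({x} : Set V).ncard :=
            Set.ncard_le_ncard hsub (Set.toFinite _)
        _ = 1 := Set.ncard_singleton x
        _ ≤ n + 1 := by omega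
    · obtain ⟨y, hch, hvPC⟩ := class_of_not_B h hx hv hvB
      have hyN : y ∈ d.N := hch.1
      have hyB : y ∈ d.B x := child_mem_B h hx hch
      obtain ⟨p₀, hp₀⟩ := hex
      obtain ⟨p₁, p₂, hdec, hyBx, hp₂B⟩ := hvPC.2.2 p₀ hp₀
      have hsuf : IsPath (Asub A (Bstar d s x)) (y :: p₂) y v := isPath_suffix_s15 hp₀ hdec
      have hmem2 : ∀ w ∈ p₂, w ∈ Bstar d s y := by
        intro w hw
        obtain ⟨c, hc⟩ := mem_of_chain'_cons hsuf.1 hw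
        have hwBx : w ∈ Bstar d s x := hc.2.2
        have hwB : w ∉ d.B x := hp₂B w hw
        obtain ⟨y', hch', hwPC'⟩ := class_of_not_B h hx hwBx hwB
        obtain ⟨u, t, hut⟩ := List.append_of_mem hw
        have hdec2 : p₀ = (p₁ ++ y :: u) ++ w :: t := by rw [hdec, hut]; simp
        have hpre := isPath_prefix_s15 hp₀ hdec2
        have hLT1 : LastTouch (d.B x) ((p₁ ++ y :: u) ++ [w]) y := by
          refine ⟨p₁, u ++ [w], by simp, hyBx, ?_⟩
          intro z hz
          rcases List.mem_append.1 hz with h' | h'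
          · exact hp₂B z (by rw [hut]; simp [h'])
          · simp at h'; subst h'; exact hwB
        have hLT2 := hwPC'.2.2 _ hpre
        have heq : y' = y := lastTouch_unique hLT2 hLT1
        subst heq
        rw [h.child_part x hx y' hch']
        exact Set.mem_insert_iff.2 (Or.inr hwPC')
      have hyY : y ∈ Bstar d s y := mem_bstar_self h hyN
      have hsufY : IsPath (Asub A (Bstar d s y)) (y :: p₂) y v := by
        refine ⟨?_, hsuf.2.1, hsuf.2.2.1, hsuf.2.2.2⟩
        refine chain'_mono_mem₂ hsuf.1 ?_
        intro a b hab hamem hbmem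
        have ha : a ∈ Bstar d s y := by
          rcases List.mem_cons.1 hamem with rfl | h'
          · exact hyY
          · exact hmem2 a h'
        have hb : b ∈ Bstar d s y := by
          rcases List.mem_cons.1 hbmem with rfl | h'
          · exact hyY
          · exact hmem2 b h'
        exact ⟨hab.1, ha, hb⟩
      have hvY : v ∈ Bstar d s y := by
        rw [h.child_part x hx y hch]
        exact Set.mem_insert_iff.2 (Or.inr hvPC)
      obtain ⟨p', q', hp', hq', hC⟩ := ih y hyN (chainBound_child hcb hch) v hvY ⟨_, hsufY⟩
      obtain ⟨t, rfl⟩ := isPath_head_cons hp'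
      obtain ⟨t', rfl⟩ := isPath_head_cons hq'
      have hvy : v ≠ y := fun hvy => hvB (hvy ▸ hyB)
      have htne : t ≠ [] := by
        rintro rfl
        have hv' := hp'.2.2.1
        simp at hv'
        exact hvy hv'.symm
      have ht'ne : t' ≠ [] := by
        rintro rfl
        have hv' := hq'.2.2.1
        simp at hv'
        exact hvy hv'.symm
      have hmemT : ∀ w ∈ t, w ∈ Bstar d s y := by
        intro w hw
        obtain ⟨c, hc⟩ := mem_of_chain'_cons hp'.1 hw
        exact hc.2.2
      have hmemT' : ∀ w ∈ t', w ∈ Bstar d s y := by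
        intro w hw
        obtain ⟨c, hc⟩ := mem_of_chain'_cons hq'.1 hw
        exact hc.2.2
      obtain ⟨p₀', q₀', hp₀', hq₀', hdisj0⟩ := diblock_two_paths h hx hyB
      refine ⟨p₀' ++ t, q₀' ++ t', concat_path h hx hch hp₀' hp' htne,
        concat_path h hx hch hq₀' hq' ht'ne, ?_⟩
      have hyin : y ∈ (vset (y :: t) ∩ vset (y :: t')) \ {v} :=
        ⟨⟨by simp [vset], by simp [vset]⟩, by simpa using Ne.symm hvy⟩
      have hsub : (vset (p₀' ++ t) ∩ vset (q₀' ++ t')) \ {v}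
          ⊆ insert x ((vset (y :: t) ∩ vset (y :: t')) \ {v}) := by
        rintro w ⟨⟨hwp, hwq⟩, hwv⟩
        have hwp' : w ∈ p₀' ++ t := hwp
        have hwq' : w ∈ q₀' ++ t' := hwq
        have hwv' : w ≠ v := by simpa using hwv
        rcases List.mem_append.1 hwp' with hw1 | hw1 <;>
          rcases List.mem_append.1 hwq' with hw2 | hw2
        · rcases hdisj0 w hw1 hw2 with rfl | rfl
          · exact Set.mem_insert _ _
          · exact Set.mem_insert_of_mem _ hyin
        · have hwyeq : w = y := path_avoid_class h hx hch hp₀' w hw1 (hmemT' w hw2)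
          subst hwyeq
          exact Set.mem_insert_of_mem _ hyin
        · have hwyeq : w = y := path_avoid_class h hx hch hq₀' w hw2 (hmemT w hw1)
          subst hwyeq
          exact Set.mem_insert_of_mem _ hyin
        · exact Set.mem_insert_of_mem _
            ⟨⟨by simp [vset, hw1], by simp [vset, hw2]⟩, by simpa using hwv'⟩
      calc ((vset (p₀' ++ t) ∩ vset (q₀' ++ t')) \ {v}).ncard
          ≤ (insert x ((vset (y :: t) ∩ vset (y :: t')) \ {v})).ncard :=
            Set.ncard_le_ncard hsub (Set.toFinite _)
        _ ≤ ((vset (y :: t) ∩ vset (y :: t')) \ {v}).ncard + 1 := Set.ncard_insert_le _ _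
        _ ≤ n + 1 := by omega

end Decomp

/-- if the decomposition tree rooted at `s` has height at most
`dh` (at most `dh` nodes on every root-to-leaf path), then any out-tree with
`ℓ` leaves yields an out-tree rooted at `s` with at least `(ℓ - dh)/2`
leaves. -/
theorem cutDecomp_bounded_height_reroot {V : Type*} [Fintype V]
    (A : V → V → Prop) (s : V) (hreach : ∀ v, Reaches A s v)
    (d : PreDecomp V) (h : IsCutDecomp A s d) (dh : ℕ)
    (hheight : ∀ q : List V, List.Chain' (fun a b => IsChild d s b a) q →
      q.head? = some s → q.length ≤ dh)
    (T : V → V → Prop) (S : Set V) (r : V) (ℓ : ℕ)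
    (hT : IsOutTree A T S r) (hl : (leaves T S).ncard = ℓ) :
    ∃ (T' : V → V → Prop) (S' : Set V),
      IsOutTree A T' S' s ∧ (ℓ - dh) / 2 ≤ (leaves T' S').ncard := by
  classical
  have hsN := h.root_mem
  obtain ⟨p₀, hp₀⟩ := hreach r
  have hp₀' : IsPath (Asub A (Bstar d s s)) p₀ s r := by
    refine ⟨?_, hp₀.2.1, hp₀.2.2.1, hp₀.2.2.2⟩
    refine List.IsChain.imp ?_ hp₀.1
    intro a b hab
    exact ⟨hab, by rw [h.cover]; trivial, by rw [h.cover]; trivial⟩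
  have hrB : r ∈ Bstar d s s := by rw [h.cover]; trivial
  have hcb : chainBound s d s dh := hheight
  obtain ⟨p, q, hp, hq, hC⟩ := two_paths h dh s hsN hcb r hrB ⟨p₀, hp₀'⟩
  have hpA : IsPath A p s r :=
    ⟨List.IsChain.imp (fun a b hab => hab.1) hp.1, hp.2.1, hp.2.2.1, hp.2.2.2⟩
  have hqA : IsPath A q s r :=
    ⟨List.IsChain.imp (fun a b hab => hab.1) hq.1, hq.2.1, hq.2.2.1, hq.2.2.2⟩
  obtain ⟨Tp, Sp, hTp, hLp⟩ := absorb hT hpA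
  obtain ⟨Tq, Sq, hTq, hLq⟩ := absorb hT hqA
  set L := leaves T S with hLdef
  set a := (L ∩ (vset p \ {r})).ncard with hadef
  set b := (L ∩ (vset q \ {r})).ncard with hbdef
  have hPa : (L \ (vset p \ {r})).ncard = ℓ - a := by
    have hdiff : L \ (vset p \ {r}) = L \ (L ∩ (vset p \ {r})) := by
      ext z; constructor
      · rintro ⟨hz1, hz2⟩; exact ⟨hz1, fun hz3 => hz2 hz3.2⟩
      · rintro ⟨hz1, hz2⟩; exact ⟨hz1, fun hz3 => hz2 ⟨hz1, hz3⟩⟩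
    rw [hdiff, Set.ncard_diff Set.inter_subset_left (Set.toFinite _), hl]
  have hPb : (L \ (vset q \ {r})).ncard = ℓ - b := by
    have hdiff : L \ (vset q \ {r}) = L \ (L ∩ (vset q \ {r})) := by
      ext z; constructor
      · rintro ⟨hz1, hz2⟩; exact ⟨hz1, fun hz3 => hz2 hz3.2⟩
      · rintro ⟨hz1, hz2⟩; exact ⟨hz1, fun hz3 => hz2 ⟨hz1, hz3⟩⟩
    rw [hdiff, Set.ncard_diff Set.inter_subset_left (Set.toFinite _), hl]
  have ha : ℓ - a ≤ (leaves Tp Sp).ncard := by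
    rw [← hPa]; exact Set.ncard_le_ncard hLp (Set.toFinite _)
  have hb : ℓ - b ≤ (leaves Tq Sq).ncard := by
    rw [← hPb]; exact Set.ncard_le_ncard hLq (Set.toFinite _)
  have hsum : a + b ≤ ℓ + dh := by
    have hie := Set.ncard_union_add_ncard_inter (L ∩ (vset p \ {r})) (L ∩ (vset q \ {r}))
      (Set.toFinite _) (Set.toFinite _)
    have h1 : ((L ∩ (vset p \ {r})) ∪ (L ∩ (vset q \ {r}))).ncard ≤ ℓ := by
      rw [← hl]
      refine Set.ncard_le_ncard ?_ (Set.toFinite _)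
      rintro z (hz | hz)
      · exact hz.1
      · exact hz.1
    have h2 : ((L ∩ (vset p \ {r})) ∩ (L ∩ (vset q \ {r}))).ncard ≤ dh := by
      refine le_trans (Set.ncard_le_ncard ?_ (Set.toFinite _)) hC
      rintro z ⟨⟨_, hzp, hznr⟩, ⟨_, hzq, _⟩⟩
      exact ⟨⟨hzp, hzq⟩, hznr⟩
    omega
  rcases le_total a b with hle | hle
  · exact ⟨Tp, Sp, hTp, by omega⟩
  · exact ⟨Tq, Sq, hTq, by omega⟩

end CutPaper
end
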